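/- Let μ ∈ ℝ, σ > 0, and p ∈ (0,1), and let φ_{μ,σ²} denote the density of the normal distribution N(μ, σ²). Then the threshold t = μ + √2·σ·erf⁻¹(1 − 2p) + σ² satisfies ∫_t^{+∞} e^x φ_{μ,σ²}(x) dx = p · ∫_ℝ e^x φ_{μ,σ²}(x) dx; that is, the nucleus mass I(t)/I(−∞) equals p exactly at this threshold. -/

import Mathlib

open MeasureTheory Real

/-- The Gauss error function `erf x = (2/√π) ∫_0^x exp (-u²) du`. -/
noncomputable def erf (x : ℝ) : ℝ :=
  (2 / Real.sqrt π) * ∫ u in (0:ℝ)..x, Real.exp (-u ^ 2)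

/-- The density of the normal distribution `N(μ, σ²)`. -/
noncomputable def gaussianDensity (μ σ x : ℝ) : ℝ :=
  (1 / (σ * Real.sqrt (2 * π))) * Real.exp (-(x - μ) ^ 2 / (2 * σ ^ 2))

lemma integral_Ioi_comp_sub (f : ℝ → ℝ) (a c : ℝ) :
    ∫ x in Set.Ioi a, f (x - c) = ∫ x in Set.Ioi (a - c), f x := by
  have h := (measurePreserving_sub_right (volume : Measure ℝ) c).setIntegral_preimage_emb
    (MeasurableEquiv.subRight c).measurableEmbedding f (Set.Ioi (a - c))
  have hpre : (fun x : ℝ => x - c) ⁻¹' Set.Ioi (a - c) = Set.Ioi a := by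
    rw [Set.preimage_sub_const_Ioi, sub_add_cancel]
  simpa [hpre] using h

lemma integrable_exp_neg_sq : MeasureTheory.Integrable (fun u : ℝ => Real.exp (-u ^ 2)) := by
  have := integrable_exp_neg_mul_sq (b := 1) one_pos
  simpa using this

lemma integral_exp_neg_sq : (∫ u : ℝ, Real.exp (-u ^ 2)) = Real.sqrt π := by
  have := integral_gaussian 1
  simpa using this

lemma integral_Iic_zero_exp_neg_sq :
    (∫ u in Set.Iic (0:ℝ), Real.exp (-u ^ 2)) = Real.sqrt π / 2 := by
  have h1 : (∫ u in Set.Ioi (0:ℝ), Real.exp (-u ^ 2)) = Real.sqrt π / 2 := by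
    have := integral_gaussian_Ioi 1
    simpa using this
  have h2 := intervalIntegral.integral_Iic_add_Ioi (b := (0:ℝ)) (μ := volume)
    (f := fun u : ℝ => Real.exp (-u ^ 2))
    integrable_exp_neg_sq.integrableOn integrable_exp_neg_sq.integrableOn
  rw [integral_exp_neg_sq] at h2
  linarith

lemma integral_Ioi_exp_neg_sq (y : ℝ) :
    (∫ u in Set.Ioi y, Real.exp (-u ^ 2))
      = Real.sqrt π / 2 - Real.sqrt π / 2 * erf y := by
  have h2 := intervalIntegral.integral_Iic_add_Ioi (b := y) (μ := volume)
    (f := fun u : ℝ => Real.exp (-u ^ 2))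
    integrable_exp_neg_sq.integrableOn integrable_exp_neg_sq.integrableOn
  rw [integral_exp_neg_sq] at h2
  have h3 := intervalIntegral.integral_Iic_sub_Iic (μ := volume)
    (f := fun u : ℝ => Real.exp (-u ^ 2)) (a := (0:ℝ)) (b := y)
    integrable_exp_neg_sq.integrableOn integrable_exp_neg_sq.integrableOn
  have hpi : Real.sqrt π ≠ 0 := by positivity
  have herf : (∫ u in (0:ℝ)..y, Real.exp (-u ^ 2)) = Real.sqrt π / 2 * erf y := by
    rw [erf]; field_simp
  rw [herf, integral_Iic_zero_exp_neg_sq] at h3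
  linarith

/-- For Gaussian logits `N(μ, σ²)` and `p ∈ (0,1)`, the threshold
`t = μ + √2·σ·erf⁻¹(1 − 2p) + σ²` (where `y = erf⁻¹(1 − 2p)`, i.e. `erf y = 1 − 2p`)
satisfies `∫_t^∞ exp x * φ_{μ,σ²} x = p * ∫_ℝ exp x * φ_{μ,σ²} x`; that is, the nucleus
mass `I(t)/I(−∞)` equals `p` exactly at this threshold. -/
theorem stmt2 (μ σ p y : ℝ) (hσ : 0 < σ) (hp0 : 0 < p) (hp1 : p < 1)
    (hy : erf y = 1 - 2 * p) :
    ∫ x in Set.Ioi (μ + Real.sqrt 2 * σ * y + σ ^ 2), Real.exp x * gaussianDensity μ σ x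
      = p * ∫ x, Real.exp x * gaussianDensity μ σ x := by
  have hσ' : σ ≠ 0 := hσ.ne'
  have hs2 : (0:ℝ) < Real.sqrt 2 := by positivity
  have hc : (0:ℝ) < Real.sqrt 2 * σ := by positivity
  set C := Real.exp (μ + σ ^ 2 / 2) with hC
  set m := μ + σ ^ 2 with hm
  -- pointwise completion of the square
  have hpt : ∀ x : ℝ, Real.exp x * gaussianDensity μ σ x = C * gaussianDensity m σ x := by
    intro x
    simp only [gaussianDensity, hC, hm]
    rw [show Real.exp x * ((1 / (σ * Real.sqrt (2 * π))) * Real.exp (-(x - μ) ^ 2 / (2 * σ ^ 2)))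
        = (1 / (σ * Real.sqrt (2 * π))) * Real.exp (x + -(x - μ) ^ 2 / (2 * σ ^ 2)) by
      rw [Real.exp_add]; ring,
      show Real.exp (μ + σ ^ 2 / 2) * ((1 / (σ * Real.sqrt (2 * π))) *
          Real.exp (-(x - (μ + σ ^ 2)) ^ 2 / (2 * σ ^ 2)))
        = (1 / (σ * Real.sqrt (2 * π))) *
          Real.exp (μ + σ ^ 2 / 2 + -(x - (μ + σ ^ 2)) ^ 2 / (2 * σ ^ 2)) by
      rw [Real.exp_add (μ + σ ^ 2 / 2) (-(x - (μ + σ ^ 2)) ^ 2 / (2 * σ ^ 2))]; ring]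
    have hx : x + -(x - μ) ^ 2 / (2 * σ ^ 2)
        = μ + σ ^ 2 / 2 + -(x - (μ + σ ^ 2)) ^ 2 / (2 * σ ^ 2) := by
      field_simp
      ring
    rw [hx]
  -- the shifted gaussian as a function of (x - m)
  have hgd : ∀ x : ℝ, gaussianDensity m σ x
      = (1 / (σ * Real.sqrt (2 * π))) * Real.exp (-((x - m) / (Real.sqrt 2 * σ)) ^ 2) := by
    intro x
    simp only [gaussianDensity]
    congr 2
    rw [div_pow]
    rw [mul_pow]
    rw [Real.sq_sqrt (by norm_num : (2:ℝ) ≥ 0)]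
    field_simp
  -- tail integral of shifted gaussian
  have htail : ∀ a : ℝ, (∫ x in Set.Ioi a, gaussianDensity m σ x)
      = (1 / Real.sqrt π) * ∫ u in Set.Ioi ((a - m) / (Real.sqrt 2 * σ)), Real.exp (-u ^ 2) := by
    intro a
    calc (∫ x in Set.Ioi a, gaussianDensity m σ x)
        = ∫ x in Set.Ioi a,
            (fun z : ℝ => (1 / (σ * Real.sqrt (2 * π))) * Real.exp (-(z / (Real.sqrt 2 * σ)) ^ 2))
              (x - m) := by
          refine setIntegral_congr_fun measurableSet_Ioi fun x _ => ?_
          simpa using hgd x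
      _ = ∫ z in Set.Ioi (a - m),
            (1 / (σ * Real.sqrt (2 * π))) * Real.exp (-(z / (Real.sqrt 2 * σ)) ^ 2) := by
          exact integral_Ioi_comp_sub
            (fun z : ℝ => (1 / (σ * Real.sqrt (2 * π))) * Real.exp (-(z / (Real.sqrt 2 * σ)) ^ 2))
            a m
      _ = (1 / (σ * Real.sqrt (2 * π))) *
            ∫ z in Set.Ioi (a - m), Real.exp (-(z / (Real.sqrt 2 * σ)) ^ 2) := by
          rw [integral_const_mul]
      _ = (1 / Real.sqrt π) * ∫ u in Set.Ioi ((a - m) / (Real.sqrt 2 * σ)), Real.exp (-u ^ 2) := by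
          have hsub := integral_comp_mul_left_Ioi
            (g := fun z : ℝ => Real.exp (-(z / (Real.sqrt 2 * σ)) ^ 2))
            ((a - m) / (Real.sqrt 2 * σ)) hc
          rw [mul_div_cancel₀ _ hc.ne'] at hsub
          have heq : ∀ u : ℝ,
              Real.exp (-((Real.sqrt 2 * σ * u) / (Real.sqrt 2 * σ)) ^ 2) = Real.exp (-u ^ 2) := by
            intro u; rw [mul_div_cancel_left₀ _ hc.ne']
          simp only [heq] at hsub
          rw [eq_comm, smul_eq_mul, inv_mul_eq_iff_eq_mul₀ hc.ne'] at hsub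
          rw [hsub]
          have hπ : Real.sqrt (2 * π) = Real.sqrt 2 * Real.sqrt π := by
            rw [← Real.sqrt_mul (by norm_num)]
          rw [hπ]
          have hpi : (0:ℝ) < Real.sqrt π := by positivity
          field_simp
  -- full integral of shifted gaussian equals 1
  have hfull : (∫ x : ℝ, gaussianDensity m σ x) = 1 := by
    calc (∫ x : ℝ, gaussianDensity m σ x)
        = ∫ x : ℝ, (fun z : ℝ => (1 / (σ * Real.sqrt (2 * π))) *
            Real.exp (-(1 / (2 * σ ^ 2)) * z ^ 2)) (x - m) := by
          refine integral_congr_ae (Filter.Eventually.of_forall fun x => ?_)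
          simp only [gaussianDensity]
          congr 1
          rw [neg_mul]
          congr 1
          field_simp
      _ = ∫ z : ℝ, (1 / (σ * Real.sqrt (2 * π))) * Real.exp (-(1 / (2 * σ ^ 2)) * z ^ 2) := by
          exact integral_sub_right_eq_self (μ := volume)
            (fun z : ℝ => (1 / (σ * Real.sqrt (2 * π))) * Real.exp (-(1 / (2 * σ ^ 2)) * z ^ 2)) m
      _ = (1 / (σ * Real.sqrt (2 * π))) * Real.sqrt (π / (1 / (2 * σ ^ 2))) := by
          rw [integral_const_mul, integral_gaussian]
      _ = 1 := by
          rw [show π / (1 / (2 * σ ^ 2)) = σ ^ 2 * (2 * π) by field_simp,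
            Real.sqrt_mul (by positivity : (0:ℝ) ≤ σ ^ 2) (2 * π), Real.sqrt_sq hσ.le]
          field_simp
  -- assemble
  have hLHS : (∫ x in Set.Ioi (μ + Real.sqrt 2 * σ * y + σ ^ 2),
      Real.exp x * gaussianDensity μ σ x) = C * p := by
    rw [setIntegral_congr_fun measurableSet_Ioi (fun x _ => hpt x), integral_const_mul,
      htail]
    have harg : (μ + Real.sqrt 2 * σ * y + σ ^ 2 - m) / (Real.sqrt 2 * σ) = y := by
      rw [hm]; field_simp; ring
    rw [harg, integral_Ioi_exp_neg_sq, hy]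
    have hpi : (0:ℝ) < Real.sqrt π := by positivity
    field_simp
    ring
  have hRHS : (∫ x : ℝ, Real.exp x * gaussianDensity μ σ x) = C := by
    rw [integral_congr_ae (Filter.Eventually.of_forall hpt), integral_const_mul, hfull, mul_one]
  rw [hLHS, hRHS]; ring
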